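/- Let M be a length-one ℤ[t]-module of exponent 2ⁿ, let σ be an involution of ℤ[t], and let b : M × M → ℚ[t]/ℤ[t] be a nonsingular σ-sesquilinear linking form on M. Then a submodule N of M has colength one in M (i.e. M/N has length one) if and only if N = X^⊥ for some submodule X of M. -/

import Mathlib

noncomputable instance : Algebra (Polynomial ℤ) (Polynomial ℚ) :=
  (Polynomial.mapRingHom (Int.castRingHom ℚ)).toAlgebra

/-- The `ℤ[t]`-module `ℚ[t]/ℤ[t]`. -/
noncomputable abbrev QtZt : Type :=
  Polynomial ℚ ⧸ LinearMap.range (Algebra.linearMap (Polynomial ℤ) (Polynomial ℚ))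

/-- An `R`-module `M` has *length one*. -/
def IsLengthOne (R M : Type*) [CommRing R] [AddCommGroup M] [Module R M] : Prop :=
  ∃ (k l : ℕ) (f : (Fin k → R) →ₗ[R] (Fin l → R)) (g : (Fin l → R) →ₗ[R] M),
    Function.Injective f ∧ Function.Surjective g ∧ LinearMap.range f = LinearMap.ker g

/-- A nonsingular `σ`-sesquilinear linking form on a `ℤ[t]`-module `M`, with values in
`ℚ[t]/ℤ[t]`.  Here `σ` is an involution of `ℤ[t]` and `τ` is the induced additive
involution `σ̄` of `ℚ[t]/ℤ[t]`.  Nonsingularity is stated as bijectivity of the adjoint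
`x ↦ (y ↦ b x y) : M → M^∧`. -/
structure LinkingForm (σ : Polynomial ℤ ≃+* Polynomial ℤ) (τ : QtZt →+ QtZt)
    (M : Type) [AddCommGroup M] [Module (Polynomial ℤ) M] where
  b : M → M → QtZt
  add_left : ∀ x x' y, b (x + x') y = b x y + b x' y
  add_right : ∀ x y y', b x (y + y') = b x y + b x y'
  smul_right : ∀ (p : Polynomial ℤ) (x y : M), b x (p • y) = p • b x y
  smul_left : ∀ (p : Polynomial ℤ) (x y : M), b (p • x) y = σ p • b x y
  symm : ∀ x y, b x y = τ (b y x)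
  nondegen : ∀ x, (∀ y, b x y = 0) → x = 0
  adj_surj : ∀ φ : M →ₗ[Polynomial ℤ] QtZt, ∃ x, ∀ y, b x y = φ y

namespace LinkingForm

variable {σ : Polynomial ℤ ≃+* Polynomial ℤ} {τ : QtZt →+ QtZt}
  {M : Type} [AddCommGroup M] [Module (Polynomial ℤ) M]

lemma b_zero_left (L : LinkingForm σ τ M) (y : M) : L.b 0 y = 0 := by
  have h := L.add_left 0 0 y
  rw [add_zero] at h
  exact (left_eq_add.mp h)

/-- The orthogonal complement `X^⊥ = {y ∈ M : b(y,x) = 0 for all x ∈ X}`. -/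
def perp (L : LinkingForm σ τ M) (X : Submodule (Polynomial ℤ) M) :
    Submodule (Polynomial ℤ) M where
  carrier := {y | ∀ x ∈ X, L.b y x = 0}
  zero_mem' := fun x _ => L.b_zero_left x
  add_mem' := by
    intro a b ha hb x hx
    rw [L.add_left, ha x hx, hb x hx, add_zero]
  smul_mem' := by
    intro r a ha x hx
    rw [L.smul_left, ha x hx, smul_zero]

end LinkingForm

namespace ColengthAux

variable {R : Type*} [CommRing R]

lemma ilo_congr {V W : Type*} [AddCommGroup V] [Module R V] [AddCommGroup W] [Module R W]
    (e : V ≃ₗ[R] W) (h : IsLengthOne R V) : IsLengthOne R W := by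
  obtain ⟨k, l, f, g, hf, hg, hk⟩ := h
  refine ⟨k, l, f, e.toLinearMap ∘ₗ g, hf, e.surjective.comp hg, ?_⟩
  rw [LinearMap.ker_comp, LinearEquiv.ker, Submodule.comap_bot, hk]

lemma ilo_of_subsingleton {V : Type*} [AddCommGroup V] [Module R V] [Subsingleton V] :
    IsLengthOne R V :=
  ⟨0, 0, LinearMap.id, 0, fun _ _ _ => Subsingleton.elim _ _,
    fun v => ⟨0, Subsingleton.elim _ _⟩, by
      rw [LinearMap.range_id, LinearMap.ker_zero]⟩

/-- Transfer a presentation through linear equivalences of the free pieces. -/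
lemma ilo_of_presentation {V W₁ W₀ : Type*} [AddCommGroup V] [Module R V]
    [AddCommGroup W₁] [Module R W₁] [AddCommGroup W₀] [Module R W₀]
    {k l : ℕ} (e₁ : W₁ ≃ₗ[R] (Fin k → R)) (e₀ : W₀ ≃ₗ[R] (Fin l → R))
    (f : W₁ →ₗ[R] W₀) (g : W₀ →ₗ[R] V) (hf : Function.Injective f)
    (hg : Function.Surjective g) (hk : LinearMap.range f = LinearMap.ker g) :
    IsLengthOne R V := by
  refine ⟨k, l, e₀.toLinearMap ∘ₗ f ∘ₗ e₁.symm.toLinearMap, g ∘ₗ e₀.symm.toLinearMap,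
    ?_, hg.comp e₀.symm.surjective, ?_⟩
  · exact e₀.injective.comp (hf.comp e₁.symm.injective)
  · rw [LinearMap.ker_comp, ← hk, LinearMap.range_comp, LinearMap.range_comp,
      LinearEquiv.range, Submodule.map_top, Submodule.map_equiv_eq_comap_symm]

/-- equivalence between a product of two finite free modules and one -/
noncomputable def prodFinEquiv (m n : ℕ) :
    ((Fin m → R) × (Fin n → R)) ≃ₗ[R] (Fin (m + n) → R) :=
  (LinearEquiv.sumArrowLequivProdArrow (Fin m) (Fin n) R R).symm.trans
    (LinearEquiv.funCongrLeft R R finSumFinEquiv.symm)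

/-- Horseshoe lemma: extension of length-one modules is length one. -/
lemma ilo_extension {V : Type*} [AddCommGroup V] [Module R V] (K : Submodule R V)
    (h1 : IsLengthOne R K) (h2 : IsLengthOne R (V ⧸ K)) : IsLengthOne R V := by
  classical
  obtain ⟨k₁, l₁, f₁, g₁, hf₁, hg₁, hk₁⟩ := h1
  obtain ⟨k₂, l₂, f₂, g₂, hf₂, hg₂, hk₂⟩ := h2
  set b₂ := Pi.basisFun R (Fin l₂)
  -- lift g₂ through V
  have hlift : ∀ j : Fin l₂, ∃ v : V, K.mkQ v = g₂ (b₂ j) := fun j =>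
    K.mkQ_surjective (g₂ (b₂ j))
  choose vlift hvlift using hlift
  set h₂ : (Fin l₂ → R) →ₗ[R] V := b₂.constr ℕ vlift with hh₂
  have hcomm : K.mkQ ∘ₗ h₂ = g₂ := by
    apply b₂.ext
    intro j
    simp [hh₂, hvlift j]
  -- the correction map e
  have hin : ∀ j : Fin k₂, h₂ (f₂ (Pi.basisFun R (Fin k₂) j)) ∈ K := by
    intro j
    rw [← Submodule.Quotient.mk_eq_zero K, ← Submodule.mkQ_apply, ← LinearMap.comp_apply, hcomm]
    have : f₂ (Pi.basisFun R (Fin k₂) j) ∈ LinearMap.ker g₂ := hk₂ ▸ LinearMap.mem_range_self _ _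
    exact this
  have hpre : ∀ j : Fin k₂, ∃ a : Fin l₁ → R,
      g₁ a = ⟨h₂ (f₂ (Pi.basisFun R (Fin k₂) j)), hin j⟩ := fun j => hg₁ _
  choose apre hapre using hpre
  set e : (Fin k₂ → R) →ₗ[R] (Fin l₁ → R) := (Pi.basisFun R (Fin k₂)).constr ℕ apre with he
  have hge : K.subtype ∘ₗ g₁ ∘ₗ e = h₂ ∘ₗ f₂ := by
    apply (Pi.basisFun R (Fin k₂)).ext
    intro j
    simp only [LinearMap.comp_apply, he, Module.Basis.constr_basis, hapre j, Submodule.coe_subtype]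
  set f : ((Fin k₁ → R) × (Fin k₂ → R)) →ₗ[R] ((Fin l₁ → R) × (Fin l₂ → R)) :=
    LinearMap.prod (f₁ ∘ₗ LinearMap.fst R _ _ - e ∘ₗ LinearMap.snd R _ _)
      (f₂ ∘ₗ LinearMap.snd R _ _) with hfdef
  set g : ((Fin l₁ → R) × (Fin l₂ → R)) →ₗ[R] V :=
    (K.subtype ∘ₗ g₁ ∘ₗ LinearMap.fst R _ _) + (h₂ ∘ₗ LinearMap.snd R _ _) with hgdef
  have hfinj : Function.Injective f := by
    intro p q hpq
    simp only [hfdef, LinearMap.prod_apply, Function.prod, Prod.mk.injEq, LinearMap.comp_apply,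
      LinearMap.sub_apply, LinearMap.fst_apply, LinearMap.snd_apply] at hpq
    have hb : p.2 = q.2 := hf₂ hpq.2
    have ha : p.1 = q.1 := by
      apply hf₁
      have h1 := hpq.1
      rw [hb] at h1
      exact sub_left_inj.mp h1
    exact Prod.ext ha hb
  have hgsurj : Function.Surjective g := by
    intro v
    obtain ⟨w, hw⟩ := hg₂ (K.mkQ v)
    have hmem : v - h₂ w ∈ K := by
      rw [← Submodule.Quotient.mk_eq_zero K, ← Submodule.mkQ_apply, map_sub,
        ← LinearMap.comp_apply, hcomm, hw, Submodule.mkQ_apply, sub_self]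
    obtain ⟨u, hu⟩ := hg₁ ⟨v - h₂ w, hmem⟩
    refine ⟨(u, w), ?_⟩
    simp only [hgdef, LinearMap.add_apply, LinearMap.comp_apply, LinearMap.fst_apply,
      LinearMap.snd_apply, hu, Submodule.coe_subtype]
    abel
  have hrk : LinearMap.range f = LinearMap.ker g := by
    apply le_antisymm
    · rintro _ ⟨⟨a, c⟩, rfl⟩
      simp only [LinearMap.mem_ker, hgdef, hfdef, LinearMap.add_apply, LinearMap.comp_apply,
        LinearMap.prod_apply, Function.prod, LinearMap.fst_apply, LinearMap.snd_apply,
        LinearMap.sub_apply, map_sub]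
      have h1 : g₁ (f₁ a) = 0 := by
        have : f₁ a ∈ LinearMap.ker g₁ := hk₁ ▸ LinearMap.mem_range_self _ _
        exact this
      have h2 : K.subtype (g₁ (e c)) = h₂ (f₂ c) := by
        have := congrFun (congrArg (fun m => m.toFun) hge) c
        simpa using this
      rw [h1]
      simp only [Submodule.coe_subtype] at h2 ⊢
      rw [h2]
      simp
    · rintro ⟨u, w⟩ hu
      simp only [LinearMap.mem_ker, hgdef, LinearMap.add_apply, LinearMap.comp_apply,
        LinearMap.fst_apply, LinearMap.snd_apply, Submodule.coe_subtype] at hu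
      have hw : w ∈ LinearMap.ker g₂ := by
        rw [LinearMap.mem_ker, ← hcomm]
        simp only [LinearMap.comp_apply, Submodule.mkQ_apply]
        have : K.mkQ (h₂ w) = K.mkQ (h₂ w) + K.mkQ ((g₁ u : V)) := by
          rw [Submodule.mkQ_apply, Submodule.mkQ_apply, (Submodule.Quotient.mk_eq_zero K).mpr
            (g₁ u).2, add_zero]
        rw [Submodule.mkQ_apply] at this
        rw [this, Submodule.mkQ_apply, ← Submodule.Quotient.mk_add, add_comm, hu,
          Submodule.Quotient.mk_zero]
      rw [← hk₂] at hw
      obtain ⟨c, hc⟩ := hw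
      have heq : g₁ (u + e c) = 0 := by
        apply Subtype.ext
        have h2 : K.subtype (g₁ (e c)) = h₂ (f₂ c) := by
          have := congrFun (congrArg (fun m => m.toFun) hge) c
          simpa using this
        simp only [map_add, Submodule.coe_add, Submodule.coe_zero, Submodule.coe_subtype] at h2 ⊢
        rw [h2, hc, hu]
        try simp
      have hker : u + e c ∈ LinearMap.range f₁ := by
        rw [hk₁]
        exact heq
      obtain ⟨a, ha⟩ := hker
      refine ⟨(a, c), ?_⟩
      simp only [hfdef, LinearMap.prod_apply, Function.prod, LinearMap.comp_apply, LinearMap.sub_apply,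
        LinearMap.fst_apply, LinearMap.snd_apply, ha, hc]
      exact Prod.ext (add_sub_cancel_right u (e c)) rfl
  exact ilo_of_presentation (prodFinEquiv k₁ k₂) (prodFinEquiv l₁ l₂) f g hfinj hgsurj hrk

section PolyInt

open Polynomial

abbrev RZ := Polynomial ℤ

/-- the submodule `2^n R^r` of `R^r` -/
noncomputable def tp (n r : ℕ) : Submodule RZ (Fin r → RZ) :=
  LinearMap.range ((2 : RZ) ^ n • (LinearMap.id : (Fin r → RZ) →ₗ[RZ] (Fin r → RZ)))

lemma mem_tp {n r : ℕ} {v : Fin r → RZ} : v ∈ tp n r ↔ ∀ i, (2 : RZ) ^ n ∣ v i := by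
  constructor
  · rintro ⟨w, rfl⟩ i
    exact ⟨w i, rfl⟩
  · intro h
    refine ⟨fun i => (h i).choose, ?_⟩
    funext i
    simpa [mul_comm] using ((h i).choose_spec).symm

lemma two_pow_ne_zero (n : ℕ) : (2 : RZ) ^ n ≠ 0 :=
  pow_ne_zero _ two_ne_zero

/-- principality transfer: any ideal of `ℤ[t]` containing 2 is generated by one element and 2. -/
lemma ideal_two_gen (J : Ideal RZ) (h2 : (2 : RZ) ∈ J) :
    ∃ g ∈ J, J = Ideal.span {g} ⊔ Ideal.span {2} := by
  classical
  set r : RZ →+* Polynomial (ZMod 2) := Polynomial.mapRingHom (Int.castRingHom (ZMod 2)) with hr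
  have hsurj : Function.Surjective r := Polynomial.map_surjective _ ZMod.intCast_surjective
  have hker : RingHom.ker r = Ideal.span {(2 : RZ)} := by
    rw [hr, Polynomial.ker_mapRingHom, ZMod.ker_intCastRingHom, Ideal.map_span]
    simp only [Set.image_singleton]
    norm_num
  set J' : Ideal (Polynomial (ZMod 2)) := J.map r with hJ'
  obtain ⟨g', hg'⟩ : ∃ g', J' = Ideal.span {g'} := (IsPrincipalIdealRing.principal J').principal
  obtain ⟨g, hgJ, hgg'⟩ : ∃ g ∈ J, r g = g' := by
    have : g' ∈ J' := hg' ▸ Ideal.subset_span rfl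
    rwa [hJ', Ideal.mem_map_iff_of_surjective r hsurj] at this
  refine ⟨g, hgJ, le_antisymm ?_ ?_⟩
  · intro f hf
    have : r f ∈ J' := Ideal.mem_map_of_mem r hf
    rw [hg', Ideal.mem_span_singleton] at this
    obtain ⟨q', hq'⟩ := this
    obtain ⟨q, rfl⟩ := hsurj q'
    have hker' : f - q * g ∈ Ideal.span {(2 : RZ)} := by
      rw [← hker, RingHom.mem_ker, map_sub, map_mul, hq', hgg', mul_comm]
      ring
    rw [Submodule.mem_sup]
    exact ⟨q * g, Ideal.mem_span_singleton.mpr ⟨q, mul_comm _ _⟩, f - q * g, hker', by ring⟩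
  · rw [sup_le_iff]
    exact ⟨Ideal.span_le.mpr (by simpa using hgJ), Ideal.span_le.mpr (by simpa using h2)⟩

lemma ilo_R_mod_two : IsLengthOne RZ (RZ ⧸ (Ideal.span {(2 : RZ)} : Ideal RZ)) := by
  refine ⟨1, 1, (2 : RZ) • LinearMap.id,
    (Ideal.span {(2 : RZ)}).mkQ ∘ₗ LinearMap.proj 0, ?_, ?_, ?_⟩
  · intro u v huv
    funext i
    have := congrFun huv i
    simp only [LinearMap.smul_apply, LinearMap.id_apply, Pi.smul_apply, smul_eq_mul] at this
    exact mul_left_cancel₀ two_ne_zero this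
  · intro c
    obtain ⟨x, hx⟩ := (Ideal.span {(2 : RZ)}).mkQ_surjective c
    exact ⟨fun _ => x, hx⟩
  · ext u
    simp only [LinearMap.mem_range, LinearMap.mem_ker, LinearMap.comp_apply, LinearMap.proj_apply,
      Submodule.mkQ_apply, Submodule.Quotient.mk_eq_zero, Ideal.mem_span_singleton]
    constructor
    · rintro ⟨w, rfl⟩
      simp only [LinearMap.smul_apply, LinearMap.id_apply, Pi.smul_apply, smul_eq_mul]
      exact ⟨w 0, rfl⟩
    · rintro ⟨c, hc⟩
      refine ⟨fun _ => c, ?_⟩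
      funext i
      have : i = 0 := Subsingleton.elim _ _
      subst this
      simpa [smul_eq_mul] using hc.symm

/-- quotient of `R^l` by the preimage of `(2)` under a functional is length one -/
lemma ilo_quot_comap_span2 (l : ℕ) (φ : (Fin l → RZ) →ₗ[RZ] RZ) :
    IsLengthOne RZ ((Fin l → RZ) ⧸ Submodule.comap φ (Ideal.span {(2 : RZ)} : Ideal RZ)) := by
  classical
  set J : Ideal RZ := LinearMap.range φ ⊔ Ideal.span {(2 : RZ)} with hJ
  have h2J : (2 : RZ) ∈ J := Submodule.mem_sup_right (Ideal.subset_span rfl)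
  obtain ⟨g, hgJ, hJeq⟩ := ideal_two_gen J h2J
  by_cases hdvd : (2 : RZ) ∣ g
  · -- J ⊆ (2), so the quotient is trivial
    have hle : J ≤ Ideal.span {(2 : RZ)} := by
      rw [hJeq, sup_le_iff]
      exact ⟨Ideal.span_singleton_le_span_singleton.mpr hdvd, le_refl _⟩
    have htop : Submodule.comap φ (Ideal.span {(2 : RZ)} : Ideal RZ) = ⊤ := by
      rw [eq_top_iff]
      intro u _
      exact hle (Submodule.mem_sup_left (LinearMap.mem_range_self φ u))
    haveI : Subsingleton ((Fin l → RZ) ⧸ Submodule.comap φ (Ideal.span {(2 : RZ)} : Ideal RZ)) :=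
      Submodule.Quotient.subsingleton_iff.mpr htop
    exact ilo_of_subsingleton
  · -- the quotient is isomorphic to R/(2)
    set tw : Submodule RZ RZ := (Ideal.span {(2 : RZ)} : Ideal RZ) with htw
    set Ψ : (Fin l → RZ) →ₗ[RZ] RZ ⧸ tw := tw.mkQ ∘ₗ φ with hΨ
    have hkerΨ : LinearMap.ker Ψ = Submodule.comap φ tw := by
      rw [hΨ, LinearMap.ker_comp, Submodule.ker_mkQ]
    have hrangeΨ : LinearMap.range Ψ = Submodule.span RZ {tw.mkQ g} := by
      rw [hΨ, LinearMap.range_comp]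
      have h1 : Submodule.map tw.mkQ (LinearMap.range φ) = Submodule.map tw.mkQ J := by
        rw [hJ, Submodule.map_sup]
        have : Submodule.map tw.mkQ (Ideal.span {(2 : RZ)} : Ideal RZ) = ⊥ := by
          rw [eq_bot_iff]
          rintro _ ⟨x, hx, rfl⟩
          simp only [Submodule.mkQ_apply, Submodule.mem_bot, Submodule.Quotient.mk_eq_zero]
          exact hx
        rw [this, sup_bot_eq]
      rw [h1, hJeq, Submodule.map_sup]
      have h2 : Submodule.map tw.mkQ (Ideal.span {(2 : RZ)} : Ideal RZ) = ⊥ := by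
        rw [eq_bot_iff]
        rintro _ ⟨x, hx, rfl⟩
        simp only [Submodule.mkQ_apply, Submodule.mem_bot, Submodule.Quotient.mk_eq_zero]
        exact hx
      rw [h2, sup_bot_eq]
      have : (Ideal.span {g} : Ideal RZ) = Submodule.span RZ {g} := rfl
      rw [this, Submodule.map_span]
      simp
    -- cyclic module generated by mk g
    set ρ : RZ →ₗ[RZ] RZ ⧸ tw := LinearMap.toSpanSingleton RZ _ (tw.mkQ g) with hρ
    have hrangeρ : LinearMap.range ρ = Submodule.span RZ {tw.mkQ g} :=
      (LinearMap.span_singleton_eq_range RZ _ (tw.mkQ g)).symm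
    have hkerρ : LinearMap.ker ρ = tw := by
      ext p
      simp only [LinearMap.mem_ker, hρ, LinearMap.toSpanSingleton_apply]
      rw [← map_smul, Submodule.mkQ_apply, Submodule.Quotient.mk_eq_zero, htw,
        Ideal.mem_span_singleton, smul_eq_mul, Ideal.mem_span_singleton]
      constructor
      · intro h
        have hp2 : Prime (2 : RZ) := by
          have h2C : (2 : RZ) = Polynomial.C (2 : ℤ) := by norm_num
          rw [h2C, Polynomial.prime_C_iff]
          exact Int.prime_two
        rcases hp2.2.2 p g h with h' | h'
        · exact h'
        · exact absurd h' hdvd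
      · rintro ⟨c, rfl⟩
        exact ⟨c * g, by ring⟩
    have e1 : ((Fin l → RZ) ⧸ Submodule.comap φ tw) ≃ₗ[RZ] LinearMap.range Ψ :=
      (Submodule.quotEquivOfEq _ _ hkerΨ.symm).trans Ψ.quotKerEquivRange
    have e2 : (RZ ⧸ tw) ≃ₗ[RZ] LinearMap.range ρ :=
      (Submodule.quotEquivOfEq _ _ hkerρ.symm).trans ρ.quotKerEquivRange
    have e3 : LinearMap.range Ψ = LinearMap.range ρ := by rw [hrangeΨ, hrangeρ]
    have E : (RZ ⧸ tw) ≃ₗ[RZ] ((Fin l → RZ) ⧸ Submodule.comap φ tw) :=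
      (e2.trans (LinearEquiv.ofEq _ _ e3.symm)).trans e1.symm
    have base := ilo_R_mod_two
    rw [← htw] at base
    exact ilo_congr E base

end PolyInt

section KeyLemma

open Polynomial

lemma exists_fin_surj {V : Type*} [AddCommGroup V] [Module RZ V] [IsNoetherian RZ V]
    (P₂ : Submodule RZ V) :
    ∃ (l' : ℕ) (q : (Fin l' → RZ) →ₗ[RZ] V), LinearMap.range q = P₂ := by
  obtain ⟨l', s, hs⟩ := Submodule.fg_iff_exists_fin_generating_family.mp
    (IsNoetherian.noetherian P₂)
  exact ⟨l', Fintype.linearCombination RZ s, by rw [Fintype.range_linearCombination, hs]⟩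

lemma ilo_map_mkQ {V : Type*} [AddCommGroup V] [Module RZ V]
    (P P₂ : Submodule RZ V) {l' : ℕ} (q : (Fin l' → RZ) →ₗ[RZ] V)
    (hq : LinearMap.range q = P₂)
    (h : IsLengthOne RZ ((Fin l' → RZ) ⧸ Submodule.comap q P)) :
    IsLengthOne RZ (Submodule.map P.mkQ P₂) := by
  set D := P.mkQ ∘ₗ q with hD
  have hkerD : LinearMap.ker D = Submodule.comap q P := by
    rw [hD, LinearMap.ker_comp, Submodule.ker_mkQ]
  have hrangeD : LinearMap.range D = Submodule.map P.mkQ P₂ := by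
    rw [hD, LinearMap.range_comp, hq]
  have e : ((Fin l' → RZ) ⧸ Submodule.comap q P) ≃ₗ[RZ] Submodule.map P.mkQ P₂ :=
    ((Submodule.quotEquivOfEq _ _ hkerD.symm).trans D.quotKerEquivRange).trans
      (LinearEquiv.ofEq _ _ hrangeD)
  exact ilo_congr e h

lemma phi1 : ∀ (r l : ℕ) (h : (Fin l → RZ) →ₗ[RZ] (Fin r → RZ)),
    IsLengthOne RZ ((Fin l → RZ) ⧸ Submodule.comap h (tp 1 r)) := by
  intro r
  induction r with
  | zero =>
    intro l h
    have htop : Submodule.comap h (tp 1 0) = ⊤ := by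
      rw [eq_top_iff]
      intro u _
      exact mem_tp.mpr (fun i => i.elim0)
    haveI : Subsingleton ((Fin l → RZ) ⧸ Submodule.comap h (tp 1 0)) :=
      Submodule.Quotient.subsingleton_iff.mpr htop
    exact ilo_of_subsingleton
  | succ r ih =>
    intro l h
    set pf : (Fin (r + 1) → RZ) →ₗ[RZ] (Fin r → RZ) :=
      LinearMap.pi (fun i => LinearMap.proj (Fin.castSucc i)) with hpf
    set φl : (Fin l → RZ) →ₗ[RZ] RZ := LinearMap.proj (Fin.last r) ∘ₗ h with hφl
    set P := Submodule.comap h (tp 1 (r + 1)) with hP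
    set P₁ := Submodule.comap φl (Ideal.span {(2 : RZ)} : Ideal RZ) with hP₁
    have hle : P ≤ P₁ := by
      intro u hu
      have := mem_tp.mp hu (Fin.last r)
      simpa [hP₁, hφl, Ideal.mem_span_singleton, pow_one] using this
    have h2 : IsLengthOne RZ (((Fin l → RZ) ⧸ P) ⧸ Submodule.map P.mkQ P₁) :=
      ilo_congr (Submodule.quotientQuotientEquivQuotient P P₁ hle).symm
        (ilo_quot_comap_span2 l φl)
    obtain ⟨l', q, hq⟩ := exists_fin_surj P₁
    have hker : Submodule.comap q P = Submodule.comap (pf ∘ₗ h ∘ₗ q) (tp 1 r) := by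
      ext a
      simp only [Submodule.mem_comap, hP, LinearMap.comp_apply]
      rw [mem_tp, mem_tp]
      constructor
      · intro hall i
        simpa [hpf, pow_one] using hall (Fin.castSucc i)
      · intro hall i
        refine Fin.lastCases ?_ ?_ i
        · have hmem : q a ∈ P₁ := hq ▸ LinearMap.mem_range_self q a
          rw [hP₁, Submodule.mem_comap, Ideal.mem_span_singleton] at hmem
          simpa [hφl, pow_one] using hmem
        · intro j
          simpa [hpf, pow_one] using hall j
    have h1 : IsLengthOne RZ (Submodule.map P.mkQ P₁) := by
      apply ilo_map_mkQ P P₁ q hq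
      rw [hker]
      exact ih l' (pf ∘ₗ h ∘ₗ q)
    exact ilo_extension _ h1 h2

lemma phiN : ∀ (n r l : ℕ) (h : (Fin l → RZ) →ₗ[RZ] (Fin r → RZ)),
    IsLengthOne RZ ((Fin l → RZ) ⧸ Submodule.comap h (tp n r)) := by
  intro n
  induction n with
  | zero =>
    intro r l h
    have htop : Submodule.comap h (tp 0 r) = ⊤ := by
      rw [eq_top_iff]
      intro u _
      exact mem_tp.mpr (fun i => by simp)
    haveI : Subsingleton ((Fin l → RZ) ⧸ Submodule.comap h (tp 0 r)) :=
      Submodule.Quotient.subsingleton_iff.mpr htop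
    exact ilo_of_subsingleton
  | succ n ih =>
    intro r l h
    set P := Submodule.comap h (tp (n + 1) r) with hP
    set P₂ := Submodule.comap h (tp 1 r) with hP₂
    have hle : P ≤ P₂ := by
      intro u hu
      rw [hP₂, Submodule.mem_comap, mem_tp]
      intro i
      exact dvd_trans (by rw [pow_one]; exact dvd_pow_self 2 (Nat.succ_ne_zero n))
        (mem_tp.mp hu i)
    have h2 : IsLengthOne RZ (((Fin l → RZ) ⧸ P) ⧸ Submodule.map P.mkQ P₂) :=
      ilo_congr (Submodule.quotientQuotientEquivQuotient P P₂ hle).symm (phi1 r l h)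
    obtain ⟨l', q, hq⟩ := exists_fin_surj P₂
    -- divide h ∘ q by 2
    set b := Pi.basisFun RZ (Fin l') with hb
    have hdiv : ∀ j : Fin l', ∃ w : Fin r → RZ, (2 : RZ) • w = h (q (b j)) := by
      intro j
      have hmem : q (b j) ∈ P₂ := hq ▸ LinearMap.mem_range_self q _
      rw [hP₂, Submodule.mem_comap] at hmem
      obtain ⟨w, hw⟩ := hmem
      exact ⟨w, by simpa [pow_one] using hw⟩
    choose w hw using hdiv
    set h' : (Fin l' → RZ) →ₗ[RZ] (Fin r → RZ) := b.constr ℕ w with hh'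
    have hcomp : h ∘ₗ q = (2 : RZ) • h' := by
      apply b.ext
      intro j
      simp only [LinearMap.comp_apply, LinearMap.smul_apply, hh', Module.Basis.constr_basis]
      exact (hw j).symm
    have hker : Submodule.comap q P = Submodule.comap h' (tp n r) := by
      ext a
      have happ : h (q a) = (2 : RZ) • h' a := by
        have := congrFun (congrArg (fun m => m.toFun) hcomp) a
        simpa using this
      simp only [Submodule.mem_comap, hP, happ]
      rw [mem_tp, mem_tp]
      apply forall_congr'
      intro i
      rw [Pi.smul_apply, smul_eq_mul, pow_succ']
      exact mul_dvd_mul_iff_left (two_ne_zero (α := RZ))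
    have h1 : IsLengthOne RZ (Submodule.map P.mkQ P₂) := by
      apply ilo_map_mkQ P P₂ q hq
      rw [hker]
      exact ih r l' h'
    exact ilo_extension _ h1 h2

end KeyLemma
section QtZtFacts

open Polynomial

lemma algmap_eq (p : RZ) :
    algebraMap RZ (Polynomial ℚ) p = Polynomial.map (Int.castRingHom ℚ) p := rfl

lemma mapQ_injective : Function.Injective (Polynomial.map (Int.castRingHom ℚ)) :=
  Polynomial.map_injective _ Int.cast_injective

lemma qsmul_def (p : RZ) (x : Polynomial ℚ) :
    p • x = Polynomial.map (Int.castRingHom ℚ) p * x := by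
  rw [Algebra.smul_def, algmap_eq]

lemma mk_eq_zero_iff (q : Polynomial ℚ) :
    (Submodule.Quotient.mk q : QtZt) = 0 ↔
      ∃ c : RZ, Polynomial.map (Int.castRingHom ℚ) c = q := by
  rw [Submodule.Quotient.mk_eq_zero]
  constructor
  · rintro ⟨c, hc⟩
    exact ⟨c, hc⟩
  · rintro ⟨c, hc⟩
    exact ⟨c, hc⟩

lemma smul_mk (p : RZ) (q : Polynomial ℚ) :
    p • (Submodule.Quotient.mk q : QtZt) =
      Submodule.Quotient.mk (Polynomial.map (Int.castRingHom ℚ) p * q) := by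
  rw [← Submodule.Quotient.mk_smul, qsmul_def]

lemma two_pow_Q_eq (n : ℕ) :
    (2 : Polynomial ℚ) ^ n = Polynomial.C ((2 : ℚ) ^ n) := by
  rw [map_pow, map_ofNat]

lemma map_two_pow (n : ℕ) :
    Polynomial.map (Int.castRingHom ℚ) ((2 : RZ) ^ n) = (2 : Polynomial ℚ) ^ n := by
  rw [Polynomial.map_pow]
  norm_num

/-- the basic "division by 2^n" linear functional `c ↦ [c/2^n]` -/
noncomputable def elln (n : ℕ) : RZ →ₗ[RZ] QtZt where
  toFun c := Submodule.Quotient.mk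
    (Polynomial.C (((2 : ℚ) ^ n)⁻¹) * Polynomial.map (Int.castRingHom ℚ) c)
  map_add' c d := by
    simp only [Polynomial.map_add, mul_add, Submodule.Quotient.mk_add]
  map_smul' p c := by
    simp only [RingHom.id_apply, smul_eq_mul, Polynomial.map_mul, smul_mk]
    congr 1
    ring

lemma elln_apply (n : ℕ) (c : RZ) : elln n c = Submodule.Quotient.mk
    (Polynomial.C (((2 : ℚ) ^ n)⁻¹) * Polynomial.map (Int.castRingHom ℚ) c) := rfl

lemma elln_eq_zero_iff (n : ℕ) (c : RZ) : elln n c = 0 ↔ (2 : RZ) ^ n ∣ c := by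
  rw [elln_apply, mk_eq_zero_iff]
  constructor
  · rintro ⟨d, hd⟩
    refine ⟨d, mapQ_injective ?_⟩
    rw [Polynomial.map_mul, map_two_pow, two_pow_Q_eq, hd, ← mul_assoc, ← Polynomial.C_mul,
      mul_inv_cancel₀ (pow_ne_zero n two_ne_zero), Polynomial.C_1, one_mul]
  · rintro ⟨d, rfl⟩
    refine ⟨d, ?_⟩
    rw [Polynomial.map_mul, map_two_pow, two_pow_Q_eq, ← mul_assoc, ← Polynomial.C_mul,
      inv_mul_cancel₀ (pow_ne_zero n two_ne_zero), Polynomial.C_1, one_mul]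

end QtZtFacts

section Separation

/-- Separation lemma: a length-one module of exponent `2^n` is separated by
functionals into `ℚ[t]/ℤ[t]`. -/
lemma sep {V : Type*} [AddCommGroup V] [Module RZ V] (n : ℕ)
    (hILO : IsLengthOne RZ V) (hexp : ∀ v : V, (2 : RZ) ^ n • v = 0)
    {v : V} (hv : v ≠ 0) : ∃ φ : V →ₗ[RZ] QtZt, φ v ≠ 0 := by
  classical
  obtain ⟨k, l, f, g, hf, hg, hk⟩ := hILO
  obtain ⟨u, hu⟩ := hg v
  set bl := Pi.basisFun RZ (Fin l) with hbl
  -- construct B with f ∘ B = 2^n • id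
  have hpre : ∀ i : Fin l, ∃ a : Fin k → RZ, f a = (2 : RZ) ^ n • bl i := by
    intro i
    have : (2 : RZ) ^ n • bl i ∈ LinearMap.ker g := by
      rw [LinearMap.mem_ker, map_smul, hexp]
    rw [← hk] at this
    exact this
  choose a ha using hpre
  set B : (Fin l → RZ) →ₗ[RZ] (Fin k → RZ) := bl.constr ℕ a with hB
  have hfB : ∀ wv : Fin l → RZ, f (B wv) = (2 : RZ) ^ n • wv := by
    have : f ∘ₗ B = (2 : RZ) ^ n • LinearMap.id := by
      apply bl.ext
      intro i
      simp only [LinearMap.comp_apply, hB, Module.Basis.constr_basis, LinearMap.smul_apply,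
        LinearMap.id_apply]
      exact ha i
    intro wv
    have := congrFun (congrArg (fun m => m.toFun) this) wv
    simpa using this
  have hBf : ∀ x : Fin k → RZ, B (f x) = (2 : RZ) ^ n • x := by
    intro x
    apply hf
    rw [hfB (f x), map_smul]
  -- u is not in the range of f
  have hu' : u ∉ LinearMap.range f := by
    rintro ⟨x, rfl⟩
    apply hv
    rw [← hu]
    have : f x ∈ LinearMap.ker g := hk ▸ LinearMap.mem_range_self f x
    exact this
  -- some coordinate of B u is not divisible by 2^n
  have hex : ∃ i, ¬ (2 : RZ) ^ n ∣ B u i := by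
    by_contra hcon
    push_neg at hcon
    apply hu'
    choose c hc using hcon
    refine ⟨c, ?_⟩
    have h1 : f (B u) = (2 : RZ) ^ n • f c := by
      rw [← map_smul]
      congr 1
      funext i
      rw [Pi.smul_apply, smul_eq_mul, ← hc i]
    rw [hfB u] at h1
    have h2 : (2 : RZ) ^ n • (f c - u) = 0 := by
      rw [smul_sub, ← h1, sub_self]
    have h3 : f c - u = 0 := by
      funext i
      have := congrFun h2 i
      simp only [Pi.smul_apply, Pi.sub_apply, smul_eq_mul, Pi.zero_apply] at this
      rcases mul_eq_zero.mp this with h | h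
      · exact absurd h (two_pow_ne_zero n)
      · exact h
    have := sub_eq_zero.mp h3
    exact this
  obtain ⟨i, hi⟩ := hex
  -- the functional
  set φ₀ : (Fin l → RZ) →ₗ[RZ] QtZt := elln n ∘ₗ LinearMap.proj i ∘ₗ B with hφ₀
  have hker : LinearMap.ker g ≤ LinearMap.ker φ₀ := by
    intro x hx
    rw [← hk] at hx
    obtain ⟨y, rfl⟩ := hx
    rw [LinearMap.mem_ker, hφ₀, LinearMap.comp_apply, LinearMap.comp_apply, hBf y]
    rw [elln_eq_zero_iff, LinearMap.proj_apply, Pi.smul_apply, smul_eq_mul]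
    exact ⟨y i, rfl⟩
  set e := g.quotKerEquivOfSurjective hg with he
  set φ : V →ₗ[RZ] QtZt := (LinearMap.ker g).liftQ φ₀ hker ∘ₗ e.symm.toLinearMap with hφ
  refine ⟨φ, ?_⟩
  have hesymm : e.symm v = Submodule.Quotient.mk u := by
    rw [LinearEquiv.symm_apply_eq, he]
    exact hu.symm
  rw [hφ, LinearMap.comp_apply, LinearEquiv.coe_toLinearMap, hesymm, Submodule.liftQ_apply]
  rw [hφ₀, LinearMap.comp_apply, LinearMap.comp_apply, LinearMap.proj_apply, Ne,
    elln_eq_zero_iff]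
  exact hi

end Separation

section SumLemma

open Polynomial

lemma mk_sum_eq_zero_iff (n : ℕ) {m : ℕ} (q : Fin m → Polynomial ℚ) (c : Fin m → RZ)
    (hc : ∀ j, Polynomial.map (Int.castRingHom ℚ) (c j) = (2 : RZ) ^ n • q j)
    (s : Fin m → RZ) :
    (Submodule.Quotient.mk (∑ j, s j • q j) : QtZt) = 0 ↔ (2 : RZ) ^ n ∣ ∑ j, s j * c j := by
  have key : Polynomial.map (Int.castRingHom ℚ) (∑ j, s j * c j) =
      (2 : RZ) ^ n • ∑ j, s j • q j := by
    rw [Polynomial.map_sum, Finset.smul_sum]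
    refine Finset.sum_congr rfl (fun j _ => ?_)
    rw [Polynomial.map_mul, hc j, qsmul_def, qsmul_def, qsmul_def]
    ring
  constructor
  · intro h
    obtain ⟨d, hd⟩ := (mk_eq_zero_iff _).mp h
    refine ⟨d, mapQ_injective ?_⟩
    rw [key, ← hd, Polynomial.map_mul, qsmul_def]
  · rintro ⟨d, hd⟩
    apply (mk_eq_zero_iff _).mpr
    refine ⟨d, ?_⟩
    have h1 : Polynomial.map (Int.castRingHom ℚ) ((2 : RZ) ^ n * d) =
        (2 : RZ) ^ n • ∑ j, s j • q j := by rw [← hd, key]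
    rw [Polynomial.map_mul, qsmul_def] at h1
    exact mul_left_cancel₀ (by rw [map_two_pow]; exact pow_ne_zero n two_ne_zero) h1

end SumLemma

end ColengthAux


namespace LinkingForm

variable {σ : Polynomial ℤ ≃+* Polynomial ℤ} {τ : QtZt →+ QtZt}
  {M : Type} [AddCommGroup M] [Module (Polynomial ℤ) M]

lemma b_zero_right (L : LinkingForm σ τ M) (x : M) : L.b x 0 = 0 := by
  have h := L.add_right x 0 0
  rw [add_zero] at h
  exact (left_eq_add.mp h)

lemma b_sum_left (L : LinkingForm σ τ M) {ι : Type*} (s : Finset ι) (w : ι → M) (x : M) :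
    L.b (∑ j ∈ s, w j) x = ∑ j ∈ s, L.b (w j) x := by
  classical
  induction s using Finset.induction_on with
  | empty => simpa using L.b_zero_left x
  | insert _ _ hni ih =>
    rw [Finset.sum_insert hni, Finset.sum_insert hni, L.add_left, ih]

lemma mem_perp (L : LinkingForm σ τ M) (X : Submodule (Polynomial ℤ) M) (y : M) :
    y ∈ L.perp X ↔ ∀ x ∈ X, L.b y x = 0 := Iff.rfl

end LinkingForm

/-- Let `M` be a length-one `ℤ[t]`-module of exponent `2ⁿ`, `σ` an involution of
`ℤ[t]` (extending to `σQ` on `ℚ[t]` and inducing `τ` on `ℚ[t]/ℤ[t]`), and `L` a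
nonsingular `σ`-sesquilinear linking form on `M`.  Then a submodule `N` of `M` has
colength one in `M` iff `N = X^⊥` for some submodule `X` of `M`. -/
theorem colengthOne_iff_perp
    (M : Type) [AddCommGroup M] [Module (Polynomial ℤ) M]
    (n : ℕ) (hM : IsLengthOne (Polynomial ℤ) M)
    (hexp : ∀ x : M, (2 : Polynomial ℤ) ^ n • x = 0)
    (σ : Polynomial ℤ ≃+* Polynomial ℤ) (hσ : ∀ p, σ (σ p) = p)
    (σQ : Polynomial ℚ ≃+* Polynomial ℚ)
    (hσQ : ∀ p : Polynomial ℤ, σQ (algebraMap (Polynomial ℤ) (Polynomial ℚ) p) =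
      algebraMap (Polynomial ℤ) (Polynomial ℚ) (σ p))
    (τ : QtZt →+ QtZt)
    (hτ : ∀ x : Polynomial ℚ, τ (Submodule.Quotient.mk x) = Submodule.Quotient.mk (σQ x))
    (L : LinkingForm σ τ M)
    (N : Submodule (Polynomial ℤ) M) :
    IsLengthOne (Polynomial ℤ) (M ⧸ N) ↔
      ∃ X : Submodule (Polynomial ℤ) M, N = L.perp X := by

  classical
  constructor
  · -- forward: colength one implies N is a perp
    intro hILO
    refine ⟨L.perp N, ?_⟩
    apply le_antisymm
    · intro x hx
      rw [L.mem_perp]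
      intro y hy
      rw [L.symm, (L.mem_perp N y).mp hy x hx, map_zero]
    · intro z hz
      by_contra hzN
      have hexpQ : ∀ v : M ⧸ N, (2 : Polynomial ℤ) ^ n • v = 0 := by
        intro v
        obtain ⟨x, rfl⟩ := N.mkQ_surjective v
        rw [Submodule.mkQ_apply, ← Submodule.Quotient.mk_smul, hexp, Submodule.Quotient.mk_zero]
      have hvne : N.mkQ z ≠ 0 := by
        rw [Submodule.mkQ_apply, Ne, Submodule.Quotient.mk_eq_zero]
        exact hzN
      obtain ⟨φ, hφ⟩ := ColengthAux.sep n hILO hexpQ hvne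
      obtain ⟨y, hy⟩ := L.adj_surj (φ ∘ₗ N.mkQ)
      have hyperp : y ∈ L.perp N := by
        rw [L.mem_perp]
        intro x hx
        rw [hy x, LinearMap.comp_apply, Submodule.mkQ_apply,
          (Submodule.Quotient.mk_eq_zero N).mpr hx, map_zero]
      have h0 : L.b z y = 0 := (L.mem_perp _ z).mp hz y hyperp
      apply hφ
      have h1 : L.b y z = φ (N.mkQ z) := hy z
      rw [← h1, L.symm, h0, map_zero]
  · -- backward: perps have colength one
    rintro ⟨X, hNX⟩
    subst hNX
    obtain ⟨k, l, fM, g, hfM, hg, hkg⟩ := hM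
    haveI : Module.Finite (Polynomial ℤ) M := Module.Finite.of_surjective g hg
    obtain ⟨r, x, hx⟩ :=
      Submodule.fg_iff_exists_fin_generating_family.mp (IsNoetherian.noetherian X)
    -- the matrix of the pairing against generators of X
    set dl : Fin l → (Fin l → Polynomial ℤ) :=
      fun j => (fun j' => if j = j' then 1 else 0) with hdl
    set β : Fin r → Fin l → QtZt := fun i j => L.b (g (dl j)) (x i) with hβ
    have htor : ∀ i j, (2 : Polynomial ℤ) ^ n • β i j = 0 := by
      intro i j
      rw [hβ, ← L.smul_right, hexp, L.b_zero_right]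
    have hlift : ∀ i j, ∃ q : Polynomial ℚ, (Submodule.Quotient.mk q : QtZt) = β i j :=
      fun i j => Submodule.Quotient.mk_surjective _ (β i j)
    choose qq hqq using hlift
    have hc : ∀ i j, ∃ c : Polynomial ℤ,
        Polynomial.map (Int.castRingHom ℚ) c = (2 : Polynomial ℤ) ^ n • qq i j := by
      intro i j
      apply (ColengthAux.mk_eq_zero_iff _).mp
      rw [Submodule.Quotient.mk_smul, hqq, htor]
    choose c hcspec using hc
    -- the presentation matrix
    set C' : (Fin l → Polynomial ℤ) →ₗ[Polynomial ℤ] (Fin r → Polynomial ℤ) :=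
      LinearMap.pi (fun i => ∑ j, σ (c i j) • LinearMap.proj j) with hC'
    have hC'app : ∀ (u : Fin l → Polynomial ℤ) (i : Fin r),
        C' u i = ∑ j, σ (c i j) * u j := by
      intro u i
      rw [hC', LinearMap.pi_apply, LinearMap.sum_apply]
      refine Finset.sum_congr rfl (fun j _ => ?_)
      rw [LinearMap.smul_apply, LinearMap.proj_apply, smul_eq_mul]
    set GG : (Fin l → Polynomial ℤ) →ₗ[Polynomial ℤ] M ⧸ L.perp X :=
      (L.perp X).mkQ ∘ₗ g with hGG
    have hGGsurj : Function.Surjective GG :=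
      (L.perp X).mkQ_surjective.comp hg
    -- σ-divisibility flip
    have hσ2 : σ ((2 : Polynomial ℤ) ^ n) = (2 : Polynomial ℤ) ^ n := by
      rw [map_pow, map_ofNat]
    have hdvdσ : ∀ p : Polynomial ℤ, ((2 : Polynomial ℤ) ^ n ∣ p ↔
        (2 : Polynomial ℤ) ^ n ∣ σ p) := by
      intro p
      constructor
      · rintro ⟨d, rfl⟩
        exact ⟨σ d, by rw [map_mul, hσ2]⟩
      · rintro ⟨d, hd⟩
        refine ⟨σ d, ?_⟩
        have := congrArg σ hd
        rw [hσ p, map_mul, hσ2] at this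
        exact this
    -- kernels agree
    have hker : LinearMap.ker GG = Submodule.comap C' (ColengthAux.tp n r) := by
      ext u
      rw [LinearMap.mem_ker, hGG, LinearMap.comp_apply, Submodule.mkQ_apply,
        Submodule.Quotient.mk_eq_zero, Submodule.mem_comap, ColengthAux.mem_tp]
      rw [L.mem_perp]
      have step1 : (∀ x' ∈ X, L.b (g u) x' = 0) ↔ ∀ i, L.b (g u) (x i) = 0 := by
        constructor
        · intro h i
          exact h (x i) (hx ▸ Submodule.subset_span (Set.mem_range_self i))
        · intro h x' hx'
          rw [← hx] at hx'
          induction hx' using Submodule.span_induction with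
          | mem w hw =>
            obtain ⟨i, rfl⟩ := hw
            exact h i
          | zero => exact L.b_zero_right (g u)
          | add w₁ w₂ _ _ ih₁ ih₂ => rw [L.add_right, ih₁, ih₂, add_zero]
          | smul p w _ ih => rw [L.smul_right, ih, smul_zero]
      rw [step1]
      have step2 : ∀ i, L.b (g u) (x i) =
          Submodule.Quotient.mk (∑ j, σ (u j) • qq i j) := by
        intro i
        have hgu : g u = ∑ j, u j • g (dl j) := by
          rw [hdl]
          exact LinearMap.pi_apply_eq_sum_univ g u
        rw [hgu, L.b_sum_left]
        have : ∀ j, L.b (u j • g (dl j)) (x i) = σ (u j) • β i j := by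
          intro j
          rw [L.smul_left, hβ]
        simp_rw [this]
        have hrw : ∀ j, σ (u j) • β i j =
            (LinearMap.range (Algebra.linearMap (Polynomial ℤ)
              (Polynomial ℚ))).mkQ (σ (u j) • qq i j) := by
          intro j
          rw [map_smul, Submodule.mkQ_apply, hqq]
        simp_rw [hrw]
        rw [← map_sum, Submodule.mkQ_apply]
      apply forall_congr'
      intro i
      rw [step2 i, ColengthAux.mk_sum_eq_zero_iff n (qq i) (c i) (fun j => hcspec i j) (fun j => σ (u j))]
      rw [hdvdσ, map_sum]
      have : ∀ j, σ (σ (u j) * c i j) = σ (c i j) * u j := by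
        intro j
        rw [map_mul, hσ]
        ring
      simp_rw [this]
      rw [hC'app u i]
    -- conclude via the key lemma
    have hILOquot : IsLengthOne (Polynomial ℤ)
        ((Fin l → Polynomial ℤ) ⧸ LinearMap.ker GG) := by
      rw [hker]
      exact ColengthAux.phiN n r l C'
    exact ColengthAux.ilo_congr (GG.quotKerEquivOfSurjective hGGsurj) hILOquot
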